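/- Let Q(t) ∈ ℤ[t] be monic of degree r with Q mod 2 irreducible and odd constant coefficient, and let λ be the multiplicative order of t in (ℤ/2)[t]/(Q). Then the multiplicative order of t in (ℤ/2^w)[t]/(Q) equals 2^{w−1} λ for all w ≥ 1 if and only if neither Q(t) nor Q(−t) satisfies Condition S. -/

import Mathlib

open Polynomial

/-- Condition S: `Q(t)² + Q(−t)² ≡ 2·q_r·Q(t²) (mod 8)` where `q_r` is the leading
coefficient of `Q`. -/
def conditionS (Q : Polynomial ℤ) : Prop :=
  (Q ^ 2 + (Q.comp (-X)) ^ 2).map (Int.castRingHom (ZMod 8)) =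
    (C (2 * Q.leadingCoeff) * Q.comp (X ^ 2)).map (Int.castRingHom (ZMod 8))

namespace Stmt14Aux

noncomputable section

open Polynomial Ideal

/-- kernel of reduction mod n -/
lemma map_eq_zero_iff_C_dvd (n : ℕ) (p : Polynomial ℤ) :
    p.map (Int.castRingHom (ZMod n)) = 0 ↔ (C (n : ℤ)) ∣ p := by
  rw [Polynomial.C_dvd_iff_dvd_coeff, Polynomial.ext_iff]
  simp only [coeff_map, coeff_zero, Int.coe_castRingHom]
  exact forall_congr' fun i => ZMod.intCast_zmod_eq_zero_iff_dvd _ n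

lemma mem_span_iff_dvd (Q : Polynomial ℤ) (n : ℕ) (p : Polynomial ℤ) :
    p ∈ Ideal.span {(C (n : ℤ)), Q} ↔
      (Q.map (Int.castRingHom (ZMod n))) ∣ p.map (Int.castRingHom (ZMod n)) := by
  constructor
  · intro hp
    rw [Ideal.mem_span_pair] at hp
    obtain ⟨a, b, hab⟩ := hp
    refine ⟨b.map (Int.castRingHom (ZMod n)), ?_⟩
    have h0 : (C ((n : ℤ))).map (Int.castRingHom (ZMod n)) = 0 := by
      rw [Polynomial.map_C]
      push_cast
      simp
    rw [← hab, Polynomial.map_add, Polynomial.map_mul, Polynomial.map_mul, h0, mul_zero,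
      zero_add, mul_comm]
  · rintro ⟨c, hc⟩
    obtain ⟨d, rfl⟩ := Polynomial.map_surjective (Int.castRingHom (ZMod n))
      (fun x => ZMod.intCast_surjective x) c
    have h2 : (p - Q * d).map (Int.castRingHom (ZMod n)) = 0 := by
      rw [Polynomial.map_sub, Polynomial.map_mul, hc]
      ring
    obtain ⟨e, he⟩ := (map_eq_zero_iff_C_dvd n _).mp h2
    rw [Ideal.mem_span_pair]
    exact ⟨e, d, by linear_combination -he⟩

/-- the ideal (2^w, Q) of ℤ[X] -/
def In (Q : Polynomial ℤ) (w : ℕ) : Ideal (Polynomial ℤ) :=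
  Ideal.span {(2 : Polynomial ℤ) ^ w, Q}

lemma C_nat_two_pow (w : ℕ) : (C (((2 ^ w : ℕ) : ℤ)) : Polynomial ℤ) = 2 ^ w := by
  push_cast
  rw [show ((2:ℤ)^w) = ((2:ℤ))^w from rfl, Polynomial.C_pow]
  norm_num

lemma memIn_iff (Q : Polynomial ℤ) (w : ℕ) (p : Polynomial ℤ) :
    p ∈ In Q w ↔ (Q.map (Int.castRingHom (ZMod (2 ^ w)))) ∣
      p.map (Int.castRingHom (ZMod (2 ^ w))) := by
  rw [In, ← C_nat_two_pow, mem_span_iff_dvd]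

lemma memIn1_iff (Q : Polynomial ℤ) (p : Polynomial ℤ) :
    p ∈ In Q 1 ↔ (Q.map (Int.castRingHom (ZMod 2))) ∣
      p.map (Int.castRingHom (ZMod 2)) := by
  have h : In Q 1 = Ideal.span {(C ((2 : ℕ) : ℤ)), Q} := by
    rw [In]
    norm_num
  rw [h, mem_span_iff_dvd]

lemma order_dvd_iff (Q : Polynomial ℤ) (n : ℕ) (m : ℕ) :
    orderOf (Ideal.Quotient.mk
        (Ideal.span {Q.map (Int.castRingHom (ZMod n))}) (X : Polynomial (ZMod n))) ∣ m
      ↔ (X : Polynomial ℤ) ^ m - 1 ∈ Ideal.span {(C (n : ℤ)), Q} := by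
  rw [orderOf_dvd_iff_pow_eq_one, ← map_pow, show (1 : (Polynomial (ZMod n)) ⧸
      (Ideal.span {Q.map (Int.castRingHom (ZMod n))})) = Ideal.Quotient.mk _ 1 from
      (map_one _).symm, Ideal.Quotient.eq, Ideal.mem_span_singleton, mem_span_iff_dvd]
  constructor
  · intro h
    convert h using 1
    simp
  · intro h
    convert h using 1
    simp


lemma C2_eq : (C (2:ℤ) : Polynomial ℤ) = 2 := map_ofNat Polynomial.C 2

lemma two_prime_poly : Prime (2 : Polynomial ℤ) := by
  have h : Prime (C (2:ℤ)) := Polynomial.prime_C_iff.mpr Int.prime_two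
  rwa [C2_eq] at h

lemma not_two_dvd (Q : Polynomial ℤ) (hconst : Odd (Q.coeff 0)) :
    ¬ (2 : Polynomial ℤ) ∣ Q := by
  rintro ⟨g, hg⟩
  have h : Q.coeff 0 = 2 * g.coeff 0 := by
    rw [hg, Polynomial.mul_coeff_zero]
    norm_num
  rw [Int.odd_iff] at hconst
  omega

lemma cancel2 (Q : Polynomial ℤ) (hconst : Odd (Q.coeff 0)) (j : ℕ) (p : Polynomial ℤ) :
    2 * p ∈ In Q (j+1) ↔ p ∈ In Q j := by
  constructor
  · intro h
    obtain ⟨a, b, hab⟩ := Ideal.mem_span_pair.mp h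
    have h2 : (2 : Polynomial ℤ) ∣ b * Q := ⟨p - a * 2^j, by linear_combination hab⟩
    rcases (two_prime_poly.dvd_mul).mp h2 with hb | hQ
    · obtain ⟨b', rfl⟩ := hb
      have hc : (2:Polynomial ℤ) * (a * 2^j + b' * Q) = 2 * p := by linear_combination hab
      exact Ideal.mem_span_pair.mpr ⟨a, b', mul_left_cancel₀ two_ne_zero hc⟩
    · exact absurd hQ (not_two_dvd Q hconst)
  · intro h
    obtain ⟨a, b, hab⟩ := Ideal.mem_span_pair.mp h
    exact Ideal.mem_span_pair.mpr ⟨a, 2*b, by linear_combination 2 * hab⟩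

lemma cancelPow (Q : Polynomial ℤ) (hconst : Odd (Q.coeff 0)) :
    ∀ (k j : ℕ) (p : Polynomial ℤ), 2^k * p ∈ In Q (k + j) → p ∈ In Q j := by
  intro k
  induction k with
  | zero =>
      intro j p h
      simpa using h
  | succ n ih =>
      intro j p h
      have heq : (2:Polynomial ℤ)^n * (2*p) = 2^(n+1)*p := by ring
      have hidx : n + 1 + j = n + (j+1) := by omega
      rw [hidx] at h
      rw [← heq] at h
      exact (cancel2 Q hconst j p).mp (ih (j+1) (2*p) h)

lemma down (Q : Polynomial ℤ) (w : ℕ) (p : Polynomial ℤ) (h : p ∈ In Q (w+1)) :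
    p ∈ In Q w := by
  obtain ⟨a, b, hab⟩ := Ideal.mem_span_pair.mp h
  exact Ideal.mem_span_pair.mpr ⟨2*a, b, by linear_combination hab⟩

lemma sq_mem (Q : Polynomial ℤ) (w m : ℕ) (hw : 1 ≤ w)
    (h : (X : Polynomial ℤ)^m - 1 ∈ In Q w) :
    (X : Polynomial ℤ)^(2*m) - 1 ∈ In Q (w+1) := by
  obtain ⟨s, rfl⟩ : ∃ s, w = s + 1 := ⟨w - 1, by omega⟩
  obtain ⟨a, b, hab⟩ := Ideal.mem_span_pair.mp h
  refine Ideal.mem_span_pair.mpr ⟨a + 2^s * a^2, 2^(s+2)*a*b + b^2*Q + 2*b, ?_⟩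
  have hx : (X : Polynomial ℤ)^(2*m) = ((X : Polynomial ℤ)^m)^2 := by
    rw [pow_mul']
  rw [hx]
  linear_combination (a*2^(s+1) + b*Q + (X : Polynomial ℤ)^m + 1) * hab

lemma chain (Q : Polynomial ℤ) (lam : ℕ)
    (h1 : (X : Polynomial ℤ)^lam - 1 ∈ In Q 1) :
    ∀ s : ℕ, (X : Polynomial ℤ)^(2^s * lam) - 1 ∈ In Q (s+1) := by
  intro s
  induction s with
  | zero => simpa using h1
  | succ n ih =>
      have h2 := sq_mem Q (n+1) (2^n * lam) (by omega) ih
      have he : 2 * (2^n * lam) = 2^(n+1) * lam := by ring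
      rwa [he] at h2



lemma qprime (Q : Polynomial ℤ) (hirr : Irreducible (Q.map (Int.castRingHom (ZMod 2)))) :
    Prime (Q.map (Int.castRingHom (ZMod 2))) :=
  irreducible_iff_prime.mp hirr

lemma In1_prime (Q : Polynomial ℤ) (hirr : Irreducible (Q.map (Int.castRingHom (ZMod 2)))) :
    (In Q 1).IsPrime := by
  have hq : Prime (Q.map (Int.castRingHom (ZMod 2))) := qprime Q hirr
  have hEq : In Q 1 = Ideal.comap (Polynomial.mapRingHom (Int.castRingHom (ZMod 2)))
      (Ideal.span {Q.map (Int.castRingHom (ZMod 2))}) := by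
    ext p
    rw [Ideal.mem_comap, Ideal.mem_span_singleton, Polynomial.coe_mapRingHom, memIn1_iff]
  rw [hEq]
  haveI : (Ideal.span {Q.map (Int.castRingHom (ZMod 2))}).IsPrime :=
    (Ideal.span_singleton_prime hq.ne_zero).mpr hq
  exact Ideal.IsPrime.comap _

lemma partA (Q : Polynomial ℤ) (hconst : Odd (Q.coeff 0))
    (hirr : Irreducible (Q.map (Int.castRingHom (ZMod 2))))
    (lam : ℕ) (lampos : 0 < lam)
    (u v₀ : Polynomial ℤ)
    (h₀ : (X : Polynomial ℤ)^lam - 1 = 2*u + Q*v₀)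
    (ord : ℕ → ℕ)
    (hord : ∀ w m, ord w ∣ m ↔ (X : Polynomial ℤ)^m - 1 ∈ In Q w)
    (hlamd : ∀ m, lam ∣ m ↔ (X : Polynomial ℤ)^m - 1 ∈ In Q 1) :
    (∀ w, 1 ≤ w → ord w = 2^(w-1) * lam) ↔ (u ∉ In Q 1 ∧ (u+1) ∉ In Q 1) := by
  have hIP : (In Q 1).IsPrime := In1_prime Q hirr
  have h1 : (X : Polynomial ℤ)^lam - 1 ∈ In Q 1 := (hlamd lam).mp dvd_rfl
  have hchain := chain Q lam h1
  have hsq2 : (X : Polynomial ℤ)^(2*lam) - 1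
      = 4*(u*(u+1)) + Q*(4*u*v₀ + Q*v₀^2 + 2*v₀) := by
    rw [pow_mul']
    linear_combination ((X : Polynomial ℤ)^lam - 1 + 2*u + Q*v₀ + 2) * h₀
  constructor
  · intro hAll
    have key : u * (u + 1) ∉ In Q 1 := by
      intro hmem
      obtain ⟨a, b, hab⟩ := Ideal.mem_span_pair.mp hmem
      have h3 : (X : Polynomial ℤ)^(2*lam) - 1 ∈ In Q 3 := by
        refine Ideal.mem_span_pair.mpr ⟨a, 4*b + 4*u*v₀ + Q*v₀^2 + 2*v₀, ?_⟩
        rw [hsq2]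
        linear_combination 4 * hab
      have hd : ord 3 ∣ 2 * lam := (hord 3 (2*lam)).mpr h3
      rw [hAll 3 (by omega)] at hd
      norm_num at hd
      have hle := Nat.le_of_dvd (by positivity) hd
      omega
    constructor
    · intro huu
      exact key (Ideal.mul_mem_right _ _ huu)
    · intro hu1
      exact key (Ideal.mul_mem_left _ _ hu1)
  · rintro ⟨hu, hu1⟩
    have hKK : ∀ s : ℕ, (X : Polynomial ℤ)^(2^s * lam) - 1 ∉ In Q (s+2) := by
      intro s
      induction s with
      | zero =>
          intro hmem
          simp only [pow_zero, one_mul] at hmem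
          have h2u : 2*u ∈ In Q 2 := by
            obtain ⟨a, b, hab⟩ := Ideal.mem_span_pair.mp hmem
            exact Ideal.mem_span_pair.mpr ⟨a, b - v₀, by linear_combination hab + h₀⟩
          exact hu ((cancel2 Q hconst 1 u).mp h2u)
      | succ n ih =>
          intro hmem
          rcases Nat.eq_zero_or_pos n with hn | hn
          · subst hn
            rw [show (2:ℕ)^(0+1) * lam = 2*lam by norm_num] at hmem
            have h4m : (2:Polynomial ℤ)^2 * (u*(u+1)) ∈ In Q (2+1) := by
              obtain ⟨a, b, hab⟩ := Ideal.mem_span_pair.mp hmem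
              refine Ideal.mem_span_pair.mpr
                ⟨a, b - (4*u*v₀ + Q*v₀^2 + 2*v₀), by linear_combination hab + hsq2⟩
            have huu := cancelPow Q hconst 2 1 (u*(u+1)) h4m
            rcases hIP.mem_or_mem huu with h | h
            · exact hu h
            · exact hu1 h
          · obtain ⟨c, d, hcd⟩ := Ideal.mem_span_pair.mp (hchain n)
            have hid : (X : Polynomial ℤ)^(2^(n+1)*lam) - 1
                = 2^(n+2)*(c + 2^n*c^2) + Q*(2^(n+2)*c*d + d^2*Q + 2*d) := by
              rw [show (2:ℕ)^(n+1)*lam = 2*(2^n*lam) by ring, pow_mul']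
              linear_combination (-(c*2^(n+1) + d*Q + (X : Polynomial ℤ)^(2^n*lam) + 1)) * hcd
            have hmm : (2:Polynomial ℤ)^(n+2) * (c + 2^n*c^2) ∈ In Q ((n+2)+1) := by
              obtain ⟨a, b, hab⟩ := Ideal.mem_span_pair.mp hmem
              refine Ideal.mem_span_pair.mpr
                ⟨a, b - (2^(n+2)*c*d + d^2*Q + 2*d), by linear_combination hab + hid⟩
            have hcc : c + 2^n*c^2 ∈ In Q 1 := cancelPow Q hconst (n+2) 1 _ hmm
            have h2s : (2:Polynomial ℤ)^n*c^2 ∈ In Q 1 := by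
              obtain ⟨t, rfl⟩ : ∃ t, n = t+1 := ⟨n-1, by omega⟩
              exact Ideal.mem_span_pair.mpr ⟨2^t*c^2, 0, by ring⟩
            have hc1 : c ∈ In Q 1 := by
              have hsub := Ideal.sub_mem _ hcc h2s
              simpa using hsub
            obtain ⟨e, f, hef⟩ := Ideal.mem_span_pair.mp hc1
            refine ih (Ideal.mem_span_pair.mpr
              ⟨e, f*2^(n+1) + d, by linear_combination 2^(n+1) * hef + hcd⟩)
    intro w hw
    induction w, hw using Nat.le_induction with
    | base =>
        have hd1 : ord 1 ∣ lam := (hord 1 lam).mpr h1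
        have hd2 : lam ∣ ord 1 := (hlamd (ord 1)).mpr ((hord 1 (ord 1)).mp dvd_rfl)
        simpa using Nat.dvd_antisymm hd1 hd2
    | succ w hw ihw =>
        have hOrdPos : 0 < 2^(w-1)*lam := by positivity
        have hup : ord w ∣ ord (w+1) :=
          (hord w _).mpr (down Q w _ ((hord (w+1) _).mp dvd_rfl))
        have hdn : ord (w+1) ∣ 2 * ord w :=
          (hord (w+1) _).mpr (sq_mem Q w _ hw ((hord w _).mp dvd_rfl))
        rw [ihw] at hup hdn
        have hne : ord (w+1) ≠ 2^(w-1) * lam := by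
          intro hEq
          apply hKK (w-1)
          have hm := (hord (w+1) (ord (w+1))).mp dvd_rfl
          rw [hEq] at hm
          have hidx : w - 1 + 2 = w + 1 := by omega
          rwa [hidx]
        obtain ⟨k, hk⟩ := hup
        have hkd : k ∣ 2 := by
          refine (Nat.mul_dvd_mul_iff_left hOrdPos).mp ?_
          rw [← hk]
          rwa [mul_comm] at hdn
        rcases (Nat.prime_two.eq_one_or_self_of_dvd k hkd) with hk1 | hk2
        · rw [hk1, mul_one] at hk
          exact absurd hk hne
        · rw [hk2] at hk
          rw [hk]
          obtain ⟨t, rfl⟩ : ∃ t, w = t+1 := ⟨w-1, by omega⟩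
          simp [pow_succ]
          ring



lemma Ktwo : (2 : Polynomial (ZMod 2)) = 0 := by
  have h2 : (2 : ZMod 2) = 0 := rfl
  calc (2 : Polynomial (ZMod 2)) = C (2 : ZMod 2) := (map_ofNat Polynomial.C 2).symm
    _ = 0 := by rw [h2, map_zero]

lemma frob2 (p : Polynomial (ZMod 2)) : p.comp (X^2) = p^2 := by
  rw [← Polynomial.expand_eq_comp_X_pow]
  conv_rhs => rw [← Polynomial.map_frobenius_expand 2 p]
  rw [ZMod.frobenius_zmod, Polynomial.map_id]

lemma map2_comp_Xsq (p : Polynomial ℤ) :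
    (p.comp (X^2)).map (Int.castRingHom (ZMod 2))
      = (p.map (Int.castRingHom (ZMod 2)))^2 := by
  rw [Polynomial.map_comp, Polynomial.map_pow, Polynomial.map_X, frob2]

lemma exists_delta (p : Polynomial ℤ) : ∃ dp, p.comp (X^2) = p^2 - 2*dp := by
  have h : ((p^2 - p.comp (X^2)).map (Int.castRingHom (ZMod 2))) = 0 := by
    rw [Polynomial.map_sub, Polynomial.map_pow, map2_comp_Xsq]
    ring
  obtain ⟨e, he⟩ := (map_eq_zero_iff_C_dvd 2 _).mp h
  refine ⟨e, ?_⟩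
  rw [show ((2:ℕ):ℤ) = 2 by norm_num, C2_eq] at he
  linear_combination -he

lemma coeff_comp_neg_X (p : Polynomial ℤ) (i : ℕ) :
    (p.comp (-X)).coeff i = (-1)^i * p.coeff i := by
  induction p using Polynomial.induction_on' with
  | add f g hf hg =>
      simp only [add_comp, coeff_add, hf, hg]
      ring
  | monomial n a =>
      rw [Polynomial.monomial_comp, neg_pow,
        show ((-1 : Polynomial ℤ))^n = C ((-1:ℤ)^n) from by rw [map_pow, map_neg, map_one],
        ← mul_assoc, ← Polynomial.C_mul, Polynomial.coeff_C_mul, Polynomial.coeff_X_pow,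
        Polynomial.coeff_monomial]
      by_cases h : n = i
      · subst h
        simp
        ring
      · rw [if_neg (fun hh => h hh.symm), if_neg h, mul_zero, mul_zero]

lemma exists_Od (Q : Polynomial ℤ) : ∃ Od, Q.comp (-X) = Q - 2*Od := by
  have h : (C (2:ℤ)) ∣ (Q - Q.comp (-X)) := by
    rw [Polynomial.C_dvd_iff_dvd_coeff]
    intro i
    rw [coeff_sub, coeff_comp_neg_X]
    rcases Nat.even_or_odd i with he | ho
    · rw [he.neg_one_pow, one_mul, sub_self]
      exact dvd_zero _
    · rw [ho.neg_one_pow]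
      exact ⟨Q.coeff i, by ring⟩
  obtain ⟨Od, hOd⟩ := h
  rw [C2_eq] at hOd
  exact ⟨Od, by linear_combination -hOd⟩

lemma Od_bar (Q Od : Polynomial ℤ) (hOd : Q.comp (-X) = Q - 2*Od) :
    Od.map (Int.castRingHom (ZMod 2))
      = X * derivative (Q.map (Int.castRingHom (ZMod 2))) := by
  apply Polynomial.ext
  intro i
  have hco : ∀ j, (-1:ℤ)^j * Q.coeff j = Q.coeff j - 2 * Od.coeff j := by
    intro j
    have := congrArg (fun p => Polynomial.coeff p j) hOd
    simpa [coeff_comp_neg_X, coeff_sub] using this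
  match i with
  | 0 =>
      have h0 := hco 0
      simp only [pow_zero, one_mul] at h0
      have hOd0 : Od.coeff 0 = 0 := by omega
      simp [Polynomial.mul_coeff_zero, coeff_map, hOd0]
  | (j+1) =>
      rw [coeff_map, Polynomial.coeff_X_mul, Polynomial.coeff_derivative, coeff_map]
      have hj := hco (j+1)
      have h2z : (2 : ZMod 2) = 0 := rfl
      rcases Nat.even_or_odd (j+1) with he | ho
      · rw [he.neg_one_pow, one_mul] at hj
        have hOdj : Od.coeff (j+1) = 0 := by omega
        obtain ⟨k, hk⟩ := he
        have hz : ((j + 1 : ℕ) : ZMod 2) = 0 := by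
          rw [hk]
          push_cast
          linear_combination (k : ZMod 2) * h2z
        push_cast at hz
        rw [hOdj, hz, mul_zero, map_zero]
      · rw [ho.neg_one_pow] at hj
        have hOdj : Od.coeff (j+1) = Q.coeff (j+1) := by omega
        obtain ⟨k, hk⟩ := ho
        have hz : ((j + 1 : ℕ) : ZMod 2) = 1 := by
          rw [hk]
          push_cast
          linear_combination (k : ZMod 2) * h2z
        push_cast at hz
        rw [hOdj, hz, mul_one]



lemma h0_bar (Q : Polynomial ℤ) (lam : ℕ) (u v₀ : Polynomial ℤ)
    (h₀ : (X : Polynomial ℤ)^lam - 1 = 2*u + Q*v₀) :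
    (X : Polynomial (ZMod 2))^lam - 1
      = (Q.map (Int.castRingHom (ZMod 2))) * (v₀.map (Int.castRingHom (ZMod 2))) := by
  have h := congrArg (Polynomial.map (Int.castRingHom (ZMod 2))) h₀
  simp only [Polynomial.map_sub, Polynomial.map_pow, Polynomial.map_add, Polynomial.map_mul,
    Polynomial.map_ofNat, Polynomial.map_one, Polynomial.map_X] at h
  rw [Ktwo] at h
  linear_combination h

lemma lam_odd (Q : Polynomial ℤ) (hirr : Irreducible (Q.map (Int.castRingHom (ZMod 2))))
    (lam : ℕ) (lampos : 0 < lam)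
    (hlamd : ∀ m, lam ∣ m ↔ (X : Polynomial ℤ)^m - 1 ∈ In Q 1) : Odd lam := by
  by_contra hodd
  rw [Nat.not_odd_iff_even] at hodd
  obtain ⟨k, hk⟩ := hodd
  have hkpos : 0 < k := by omega
  have hq := (memIn1_iff Q _).mp ((hlamd lam).mp dvd_rfl)
  rw [Polynomial.map_sub, Polynomial.map_pow, Polynomial.map_X, Polynomial.map_one] at hq
  have h2 : (2 : Polynomial (ZMod 2)) = 0 := Ktwo
  have hsq : (X : Polynomial (ZMod 2))^lam - 1 = ((X : Polynomial (ZMod 2))^k - 1)^2 := by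
    rw [hk, pow_add]
    linear_combination ((X : Polynomial (ZMod 2))^k) * h2 - h2
  rw [hsq] at hq
  have hdd := (qprime Q hirr).dvd_of_dvd_pow hq
  have hdvd : lam ∣ k := by
    rw [hlamd k, memIn1_iff]
    rw [Polynomial.map_sub, Polynomial.map_pow, Polynomial.map_X, Polynomial.map_one]
    exact hdd
  have := Nat.le_of_dvd hkpos hdvd
  omega

lemma od_inverse (Q : Polynomial ℤ) (lam : ℕ) (lampos : 0 < lam) (lamodd : Odd lam)
    (u v₀ : Polynomial ℤ)
    (h₀ : (X : Polynomial ℤ)^lam - 1 = 2*u + Q*v₀) :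
    (Q.map (Int.castRingHom (ZMod 2))) ∣
      (X * derivative (Q.map (Int.castRingHom (ZMod 2)))) * (v₀.map (Int.castRingHom (ZMod 2)))
        - 1 := by
  set q : Polynomial (ZMod 2) := Q.map (Int.castRingHom (ZMod 2)) with hqdef
  set v : Polynomial (ZMod 2) := v₀.map (Int.castRingHom (ZMod 2)) with hvdef
  have hb := h0_bar Q lam u v₀ h₀
  have hd := congrArg derivative hb
  rw [derivative_sub, derivative_one, derivative_X_pow, derivative_mul, sub_zero] at hd
  have h2z : (2 : ZMod 2) = 0 := rfl
  have hl : ((lam : ℕ) : ZMod 2) = 1 := by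
    obtain ⟨k, hk⟩ := lamodd
    rw [hk]
    push_cast
    linear_combination (k : ZMod 2) * h2z
  rw [hl, map_one, one_mul] at hd
  have hx : (X : Polynomial (ZMod 2))^lam = X * X^(lam-1) := by
    rw [← pow_succ', Nat.sub_add_cancel lampos]
  have hE : (X : Polynomial (ZMod 2))^lam
      = (X * derivative q) * v + q * (X * derivative v) := by
    rw [hx, hd]
    ring
  exact ⟨v - X * derivative v, by linear_combination hb - hE⟩

lemma key_identity (Q : Polynomial ℤ) (lam : ℕ) (u v₀ dQ dv du : Polynomial ℤ)
    (h₀ : (X : Polynomial ℤ)^lam - 1 = 2*u + Q*v₀)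
    (hdQ : Q.comp (X^2) = Q^2 - 2*dQ)
    (hdv : v₀.comp (X^2) = v₀^2 - 2*dv)
    (hdu : u.comp (X^2) = u^2 - 2*du) :
    dQ*v₀^2 + Q^2*dv + u^2 + Q*v₀ = 2*(dQ*dv - du - u*Q*v₀ - u) := by
  have hcomp := congrArg (fun p => Polynomial.comp p ((X : Polynomial ℤ)^2)) h₀
  simp only [sub_comp, pow_comp, X_comp, add_comp, mul_comp, one_comp, ofNat_comp] at hcomp
  rw [hdQ, hdv, hdu, pow_right_comm] at hcomp
  have hA : ((X : Polynomial ℤ)^lam)^2 - 1 = (2*u + Q*v₀)^2 + 2*(2*u + Q*v₀) := by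
    linear_combination ((X : Polynomial ℤ)^lam - 1 + 2*u + Q*v₀ + 2) * h₀
  have h2T : (2 : Polynomial ℤ) * (dQ*v₀^2 + Q^2*dv + u^2 + Q*v₀)
      = 2 * (2*(dQ*dv - du - u*Q*v₀ - u)) := by
    linear_combination hcomp - hA
  exact mul_left_cancel₀ two_ne_zero h2T

lemma key_bar (Q : Polynomial ℤ) (lam : ℕ) (u v₀ dQ dv du : Polynomial ℤ)
    (h₀ : (X : Polynomial ℤ)^lam - 1 = 2*u + Q*v₀)
    (hdQ : Q.comp (X^2) = Q^2 - 2*dQ)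
    (hdv : v₀.comp (X^2) = v₀^2 - 2*dv)
    (hdu : u.comp (X^2) = u^2 - 2*du) :
    (dQ.map (Int.castRingHom (ZMod 2))) * (v₀.map (Int.castRingHom (ZMod 2)))^2
      + (Q.map (Int.castRingHom (ZMod 2)))^2 * (dv.map (Int.castRingHom (ZMod 2)))
      + (u.map (Int.castRingHom (ZMod 2)))^2
      + (Q.map (Int.castRingHom (ZMod 2))) * (v₀.map (Int.castRingHom (ZMod 2))) = 0 := by
  have hT := key_identity Q lam u v₀ dQ dv du h₀ hdQ hdv hdu
  have h := congrArg (Polynomial.map (Int.castRingHom (ZMod 2))) hT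
  simp only [Polynomial.map_add, Polynomial.map_mul, Polynomial.map_pow, Polynomial.map_sub,
    Polynomial.map_ofNat] at h
  rw [Ktwo] at h
  linear_combination h



section FieldSide

variable (q v a d e : Polynomial (ZMod 2)) (r : ℕ)

lemma o_natDegree_le (hqdeg : q.natDegree = r) (hr1 : 1 ≤ r) :
    (X * derivative q).natDegree ≤ r := by
  calc (X * derivative q).natDegree ≤ X.natDegree + (derivative q).natDegree :=
        natDegree_mul_le
    _ ≤ 1 + (r - 1) := by
        have h1 := natDegree_derivative_le q
        rw [hqdeg] at h1
        have h2 : (X : Polynomial (ZMod 2)).natDegree = 1 := natDegree_X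
        omega
    _ = r := by omega

lemma o_coeff_r (hqm : q.Monic) (hqdeg : q.natDegree = r) (hr1 : 1 ≤ r) :
    (X * derivative q).coeff r = (r : ZMod 2) := by
  obtain ⟨t, rfl⟩ : ∃ t, r = t+1 := ⟨r-1, by omega⟩
  rw [Polynomial.coeff_X_mul, Polynomial.coeff_derivative,
    show t+1 = q.natDegree from hqdeg.symm, hqm.coeff_natDegree, one_mul, hqdeg]
  push_cast
  ring

lemma oq_coeff (hqm : q.Monic) (hqdeg : q.natDegree = r) (hr1 : 1 ≤ r) :
    ((X * derivative q) * q).coeff (2*r) = (r : ZMod 2) := by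
  rw [show 2*r = r + r by ring,
    coeff_mul_add_eq_of_natDegree_le (o_natDegree_le q r hqdeg hr1) hqdeg.le,
    show q.coeff r = 1 from by rw [← hqdeg]; exact hqm.coeff_natDegree, mul_one,
    o_coeff_r q r hqm hqdeg hr1]

lemma oo_coeff (hqm : q.Monic) (hqdeg : q.natDegree = r) (hr1 : 1 ≤ r) :
    ((X * derivative q) * (X * derivative q)).coeff (2*r) = (r : ZMod 2) := by
  rw [show 2*r = r + r by ring,
    coeff_mul_add_eq_of_natDegree_le (o_natDegree_le q r hqdeg hr1) (o_natDegree_le q r hqdeg hr1),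
    o_coeff_r q r hqm hqdeg hr1]
  have hx : ∀ x : ZMod 2, x * x = x := by decide
  exact hx _

lemma v_not_dvd (hqp : Prime q)
    (hOv : q ∣ (X * derivative q) * v - 1) : ¬ q ∣ v := by
  intro hd
  have h1 : q ∣ (X * derivative q) * v := Dvd.dvd.mul_left hd _
  have h2 := dvd_sub h1 hOv
  have heq : (X * derivative q) * v - ((X * derivative q) * v - 1) = 1 := by ring
  rw [heq] at h2
  exact hqp.not_unit (isUnit_of_dvd_one h2)

lemma hF3' (hF3 : d*v^2 + q^2*e + a^2 + q*v = 0) :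
    a^2 = d*v^2 + q^2*e + q*v := by
  have htwo : (2 : Polynomial (ZMod 2)) = 0 := Ktwo
  linear_combination hF3 - (d*v^2 + q^2*e + q*v)*htwo

lemma equiv_one (hr1 : 1 ≤ r)
    (hqm : q.Monic) (hqdeg : q.natDegree = r) (hqp : Prime q)
    (hF3 : d*v^2 + q^2*e + a^2 + q*v = 0)
    (hOv : q ∣ (X * derivative q) * v - 1)
    (hdDeg : ∀ m, 2*r ≤ m → d.coeff m = 0) :
    (q ∣ a + 1) ↔
      d = (X * derivative q) * (X * derivative q) + (X * derivative q) * q := by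
  set o : Polynomial (ZMod 2) := X * derivative q with ho
  have hoD : o.natDegree ≤ r := by rw [ho]; exact o_natDegree_le q r hqdeg hr1
  have hoqc : (o*q).coeff (2*r) = (r : ZMod 2) := by rw [ho]; exact oq_coeff q r hqm hqdeg hr1
  have hooc : (o*o).coeff (2*r) = (r : ZMod 2) := by rw [ho]; exact oo_coeff q r hqm hqdeg hr1
  have htwo : (2 : Polynomial (ZMod 2)) = 0 := Ktwo
  have hvnd : ¬ q ∣ v := v_not_dvd q v hqp hOv
  have hF3'' : a^2 = d*v^2 + q^2*e + q*v := hF3' q v a d e hF3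
  constructor
  · intro h1
    have haov : q ∣ a + o*v := by
      have h2 := dvd_add h1 hOv
      have heq : (a+1) + (o*v - 1) = a + o*v := by ring
      rwa [heq] at h2
    have hsq : q^2 ∣ (a + o*v)^2 := pow_dvd_pow_of_dvd haov 2
    have hexp : (a + o*v)^2 = a^2 + (o*v)^2 := by linear_combination (a*o*v)*htwo
    rw [hexp, hF3''] at hsq
    have hq2 : q^2 ∣ (d + o*o)*v^2 + q*v := by
      have h3 := dvd_sub hsq (dvd_mul_right (q^2) e)
      have heq : (d*v^2 + q^2*e + q*v + (o*v)^2) - q^2*e = (d + o*o)*v^2 + q*v := by ring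
      rwa [heq] at h3
    have hqd : q ∣ (d + o*o) * v^2 := by
      have h4 : q ∣ (d + o*o)*v^2 + q*v := dvd_trans (dvd_pow_self q two_ne_zero) hq2
      have h5 := dvd_sub h4 (dvd_mul_right q v)
      have heq : ((d + o*o)*v^2 + q*v) - q*v = (d + o*o)*v^2 := by ring
      rwa [heq] at h5
    have hqdo : q ∣ d + o*o := by
      rcases hqp.dvd_mul.mp hqd with h | h
      · exact h
      · exact absurd (hqp.dvd_of_dvd_pow h) hvnd
    obtain ⟨w, hw⟩ := hqdo
    have hq5 : q ∣ w*v^2 + v := by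
      have heq : q * (w*v^2 + v) = (d + o*o)*v^2 + q*v := by rw [hw]; ring
      have h6 : q*q ∣ q*(w*v^2+v) := by
        rw [heq, show q*q = q^2 from (sq q).symm]
        exact hq2
      exact (mul_dvd_mul_iff_left hqp.ne_zero).mp h6
    have hq7 : q ∣ w*v + 1 := by
      have heq : w*v^2 + v = v*(w*v+1) := by ring
      rw [heq] at hq5
      rcases hqp.dvd_mul.mp hq5 with h | h
      · exact absurd h hvnd
      · exact h
    have hq8 : q ∣ (w - o) * v := by
      have h9 := dvd_sub hq7 hOv
      have heq : (w*v + 1) - (o*v - 1) = (w-o)*v + 2 := by ring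
      rw [heq, htwo, add_zero] at h9
      exact h9
    have hq10 : q ∣ w - o := by
      rcases hqp.dvd_mul.mp hq8 with h | h
      · exact h
      · exact absurd h hvnd
    obtain ⟨hh, hhh⟩ := hq10
    have hD : d - o*q - o*o = q^2 * hh := by
      linear_combination hw + q*hhh - (o*o)*htwo
    have hDdeg : ∀ m, 2*r ≤ m → (d - o*q - o*o).coeff m = 0 := by
      intro m hm
      rcases eq_or_lt_of_le hm with heq2 | hlt
      · rw [coeff_sub, coeff_sub, ← heq2, hoqc, hooc, hdDeg _ (le_refl _)]
        have hx : ∀ x : ZMod 2, (0:ZMod 2) - x - x = 0 := by decide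
        exact hx _
      · have hooq : (o*o).natDegree < m := by
          have := natDegree_mul_le (p := o) (q := o)
          have h1 := o_natDegree_le q r hqdeg hr1
          omega
        have hoqq : (o*q).natDegree < m := by
          have := natDegree_mul_le (p := o) (q := q)
          have h1 := o_natDegree_le q r hqdeg hr1
          omega
        rw [coeff_sub, coeff_sub, hdDeg _ hm, coeff_eq_zero_of_natDegree_lt hoqq,
          coeff_eq_zero_of_natDegree_lt hooq]
        ring
    have hzero : hh = 0 := by
      by_contra hne
      have hDne : d - o*q - o*o ≠ 0 := by
        rw [hD]
        exact mul_ne_zero (pow_ne_zero 2 hqp.ne_zero) hne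
      have hdeg1 : (d - o*q - o*o).natDegree < 2*r := by
        rw [natDegree_lt_iff_degree_lt hDne, Polynomial.degree_lt_iff_coeff_zero]
        intro m hm
        exact hDdeg m (by exact_mod_cast hm)
      have hdeg2 : 2*r ≤ (d - o*q - o*o).natDegree := by
        rw [hD, natDegree_mul (pow_ne_zero 2 hqp.ne_zero) hne, hqm.natDegree_pow, hqdeg]
        exact Nat.le_add_right _ _
      omega
    rw [hzero, mul_zero] at hD
    linear_combination hD
  · intro hid
    have hov2 : q ∣ (o*v)*(o*v) - 1 := by
      have h2 := hOv.mul_right (o*v+1)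
      have heq : (o*v-1)*(o*v+1) = (o*v)*(o*v) - 1 := by ring
      rwa [heq] at h2
    have ha2 : q ∣ (a+1)^2 := by
      have hx : (a+1)^2 = a^2 + 1 := by linear_combination a*htwo
      rw [hx]
      have heq : a^2 + 1 = ((o*v)*(o*v) - 1) + q*(o*v^2 + q*e + v) := by
        rw [hF3'', hid]
        linear_combination htwo
      rw [heq]
      exact dvd_add hov2 (dvd_mul_right q _)
    exact hqp.dvd_of_dvd_pow ha2

lemma equiv_zero (hr1 : 1 ≤ r)
    (hqm : q.Monic) (hqdeg : q.natDegree = r) (hqp : Prime q)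
    (hF3 : d*v^2 + q^2*e + a^2 + q*v = 0)
    (hOv : q ∣ (X * derivative q) * v - 1)
    (hdDeg : ∀ m, 2*r ≤ m → d.coeff m = 0) :
    (q ∣ a) ↔ d = (X * derivative q) * q + C ((r : ZMod 2)) * q^2 := by
  set o : Polynomial (ZMod 2) := X * derivative q with ho
  have hoD : o.natDegree ≤ r := by rw [ho]; exact o_natDegree_le q r hqdeg hr1
  have hoqc : (o*q).coeff (2*r) = (r : ZMod 2) := by rw [ho]; exact oq_coeff q r hqm hqdeg hr1
  have htwo : (2 : Polynomial (ZMod 2)) = 0 := Ktwo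
  have hvnd : ¬ q ∣ v := v_not_dvd q v hqp hOv
  have hF3'' : a^2 = d*v^2 + q^2*e + q*v := hF3' q v a d e hF3
  constructor
  · intro ha
    have hsq : q^2 ∣ a^2 := by
      have := pow_dvd_pow_of_dvd ha 2
      exact this
    rw [hF3''] at hsq
    have hq2 : q^2 ∣ d*v^2 + q*v := by
      have h3 := dvd_sub hsq (dvd_mul_right (q^2) e)
      have heq : (d*v^2 + q^2*e + q*v) - q^2*e = d*v^2 + q*v := by ring
      rwa [heq] at h3
    have hqd : q ∣ d * v^2 := by
      have h4 : q ∣ d*v^2 + q*v := dvd_trans (dvd_pow_self q two_ne_zero) hq2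
      have h5 := dvd_sub h4 (dvd_mul_right q v)
      have heq : (d*v^2 + q*v) - q*v = d*v^2 := by ring
      rwa [heq] at h5
    have hqdo : q ∣ d := by
      rcases hqp.dvd_mul.mp hqd with h | h
      · exact h
      · exact absurd (hqp.dvd_of_dvd_pow h) hvnd
    obtain ⟨w, hw⟩ := hqdo
    have hq5 : q ∣ w*v^2 + v := by
      have heq : q * (w*v^2 + v) = d*v^2 + q*v := by rw [hw]; ring
      have h6 : q*q ∣ q*(w*v^2+v) := by
        rw [heq, show q*q = q^2 from (sq q).symm]
        exact hq2
      exact (mul_dvd_mul_iff_left hqp.ne_zero).mp h6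
    have hq7 : q ∣ w*v + 1 := by
      have heq : w*v^2 + v = v*(w*v+1) := by ring
      rw [heq] at hq5
      rcases hqp.dvd_mul.mp hq5 with h | h
      · exact absurd h hvnd
      · exact h
    have hq8 : q ∣ (w - o) * v := by
      have h9 := dvd_sub hq7 hOv
      have heq : (w*v + 1) - (o*v - 1) = (w-o)*v + 2 := by ring
      rw [heq, htwo, add_zero] at h9
      exact h9
    have hq10 : q ∣ w - o := by
      rcases hqp.dvd_mul.mp hq8 with h | h
      · exact h
      · exact absurd h hvnd
    obtain ⟨hh, hhh⟩ := hq10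
    have hD : d - o*q = q^2 * hh := by
      linear_combination hw + q*hhh
    have hdeg : (d - o*q).natDegree ≤ 2*r := by
      apply natDegree_le_iff_coeff_eq_zero.mpr
      intro m hm
      have hoqq : (o*q).natDegree < m := by
        have := natDegree_mul_le (p := o) (q := q)
        have h2 := hqdeg
        omega
      rw [coeff_sub, hdDeg m (by omega), coeff_eq_zero_of_natDegree_lt hoqq]
      ring
    have hhdeg : hh.natDegree = 0 := by
      rcases eq_or_ne hh 0 with rfl | hne
      · simp
      · have hmul := natDegree_mul (pow_ne_zero 2 hqp.ne_zero) hne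
        rw [← hD, hqm.natDegree_pow, hqdeg] at hmul
        omega
    obtain ⟨c, hc⟩ := Polynomial.natDegree_eq_zero.mp hhdeg
    have hq2c : (q^2).coeff (2*r) = 1 := by
      have hcn := (hqm.pow 2).coeff_natDegree
      rwa [hqm.natDegree_pow, hqdeg] at hcn
    have hcr : c = (r : ZMod 2) := by
      have h2r := congrArg (fun p => Polynomial.coeff p (2*r)) hD
      simp only [coeff_sub] at h2r
      rw [hdDeg _ (le_refl _), hoqc, ← hc, coeff_mul_C, hq2c,
        one_mul] at h2r
      have hneg : ∀ x : ZMod 2, (0:ZMod 2) - x = x := by decide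
      rw [hneg] at h2r
      exact h2r.symm
    rw [← hc, hcr] at hD
    linear_combination hD
  · intro hid
    have heq : a^2 = q*(o*v^2 + C ((r : ZMod 2))*q*v^2 + q*e + v) := by
      rw [hF3'', hid]
      ring
    have : q ∣ a^2 := ⟨_, heq⟩
    exact hqp.dvd_of_dvd_pow this

end FieldSide



lemma C8_eq : (C ((8:ℕ):ℤ) : Polynomial ℤ) = 8 := by
  rw [show ((8:ℕ):ℤ) = (8:ℤ) from by norm_num]
  exact map_ofNat Polynomial.C 8

lemma C2n_eq : (C ((2:ℕ):ℤ) : Polynomial ℤ) = 2 := by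
  rw [show ((2:ℕ):ℤ) = (2:ℤ) from by norm_num]
  exact C2_eq

lemma four_ne_zero' : (4 : Polynomial ℤ) ≠ 0 := by
  intro h
  have := congrArg (fun p => Polynomial.coeff p 0) h
  norm_num at this

lemma map8_zero_iff (g A B : Polynomial ℤ) (hdiff : A - B = 4*g) :
    (A.map (Int.castRingHom (ZMod 8)) = B.map (Int.castRingHom (ZMod 8)))
      ↔ (g.map (Int.castRingHom (ZMod 2))) = 0 := by
  rw [← sub_eq_zero, ← Polynomial.map_sub, hdiff]
  constructor
  · intro h
    obtain ⟨k, hk⟩ := (map_eq_zero_iff_C_dvd 8 _).mp h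
    rw [C8_eq] at hk
    apply (map_eq_zero_iff_C_dvd 2 _).mpr
    rw [C2n_eq]
    refine ⟨k, ?_⟩
    have h4 : (4 : Polynomial ℤ) * g = 4 * (2 * k) := by linear_combination hk
    exact mul_left_cancel₀ four_ne_zero' h4
  · intro h
    obtain ⟨k, hk⟩ := (map_eq_zero_iff_C_dvd 2 _).mp h
    rw [C2n_eq] at hk
    apply (map_eq_zero_iff_C_dvd 8 _).mpr
    rw [C8_eq]
    exact ⟨k, by linear_combination 4*hk⟩

lemma condS_iff (Q : Polynomial ℤ) (hmonic : Q.Monic) (Od dQ : Polynomial ℤ)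
    (hOd : Q.comp (-X) = Q - 2*Od) (hdQ : Q.comp (X^2) = Q^2 - 2*dQ) :
    conditionS Q ↔
      dQ.map (Int.castRingHom (ZMod 2))
        = (X * derivative (Q.map (Int.castRingHom (ZMod 2))))
            * (X * derivative (Q.map (Int.castRingHom (ZMod 2))))
          + (X * derivative (Q.map (Int.castRingHom (ZMod 2))))
            * (Q.map (Int.castRingHom (ZMod 2))) := by
  have hdiff : (Q^2 + (Q.comp (-X))^2) - (C (2*Q.leadingCoeff) * Q.comp (X^2))
      = 4*(Od*Od - Od*Q + dQ) := by
    rw [hmonic.leadingCoeff, mul_one, C2_eq, hOd, hdQ]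
    ring
  unfold conditionS
  rw [map8_zero_iff _ _ _ hdiff]
  have hob := Od_bar Q Od hOd
  constructor
  · intro h
    rw [Polynomial.map_add, Polynomial.map_sub, Polynomial.map_mul, Polynomial.map_mul,
      hob] at h
    linear_combination h - ((X * derivative (Q.map (Int.castRingHom (ZMod 2))))
      * (X * derivative (Q.map (Int.castRingHom (ZMod 2))))) * Ktwo
  · intro h
    rw [Polynomial.map_add, Polynomial.map_sub, Polynomial.map_mul, Polynomial.map_mul,
      hob, h]
    linear_combination ((X * derivative (Q.map (Int.castRingHom (ZMod 2))))
      * (X * derivative (Q.map (Int.castRingHom (ZMod 2))))) * Ktwo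

lemma condSneg_iff (Q : Polynomial ℤ) (r : ℕ) (hr : Q.natDegree = r) (hr1 : 1 ≤ r)
    (hmonic : Q.Monic) (Od dQ : Polynomial ℤ)
    (hOd : Q.comp (-X) = Q - 2*Od) (hdQ : Q.comp (X^2) = Q^2 - 2*dQ) :
    conditionS (Q.comp (-X)) ↔
      dQ.map (Int.castRingHom (ZMod 2))
        = (X * derivative (Q.map (Int.castRingHom (ZMod 2))))
            * (Q.map (Int.castRingHom (ZMod 2)))
          + C ((r : ZMod 2)) * (Q.map (Int.castRingHom (ZMod 2)))^2 := by
  have h2z : (2 : ZMod 2) = 0 := rfl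
  have hndX : ((-X : Polynomial ℤ)).natDegree ≠ 0 := by
    rw [natDegree_neg, natDegree_X]
    exact one_ne_zero
  have hm : (Q.comp (-X)).leadingCoeff = (-1:ℤ)^r := by
    rw [Polynomial.leadingCoeff_comp hndX, hmonic.leadingCoeff, one_mul, leadingCoeff_neg,
      leadingCoeff_X, hr]
  have hmm2 : (Q.comp (-X)).comp (-X) = Q := by
    rw [Polynomial.comp_assoc, neg_comp, X_comp, neg_neg, comp_X]
  have hmX2 : (Q.comp (-X)).comp (X^2) = Q^2 - 2*dQ - 2*(Od.comp (X^2)) := by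
    rw [hOd]
    simp only [sub_comp, mul_comp, ofNat_comp]
    rw [hdQ]
    push_cast
    ring
  have hob := Od_bar Q Od hOd
  have hocomp : (Od.comp (X^2)).map (Int.castRingHom (ZMod 2))
      = ((X * derivative (Q.map (Int.castRingHom (ZMod 2))))
          * (X * derivative (Q.map (Int.castRingHom (ZMod 2))))) := by
    rw [map2_comp_Xsq, hob]
    ring
  unfold conditionS
  rw [hmm2, hm]
  rcases Nat.even_or_odd r with hre | hro
  · have hterm : (-1:ℤ)^r = 1 := hre.neg_one_pow
    have hrz : ((r:ℕ) : ZMod 2) = 0 := by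
      obtain ⟨k, hk⟩ := hre
      rw [hk]
      push_cast
      linear_combination (k : ZMod 2) * h2z
    have hdiff : ((Q.comp (-X))^2 + Q^2) - (C (2*(-1:ℤ)^r) * ((Q.comp (-X)).comp (X^2)))
        = 4*(Od*Od - Od*Q + dQ + Od.comp (X^2)) := by
      rw [hterm, mul_one, C2_eq, hmX2, hOd]
      ring
    rw [map8_zero_iff _ _ _ hdiff, hrz]
    constructor
    · intro h
      rw [Polynomial.map_add, Polynomial.map_add, Polynomial.map_sub, Polynomial.map_mul,
        Polynomial.map_mul, hob, hocomp] at h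
      rw [map_zero, zero_mul, add_zero]
      linear_combination h - ((X * derivative (Q.map (Int.castRingHom (ZMod 2))))
        * (X * derivative (Q.map (Int.castRingHom (ZMod 2))))) * Ktwo
    · intro h
      rw [map_zero, zero_mul, add_zero] at h
      rw [Polynomial.map_add, Polynomial.map_add, Polynomial.map_sub, Polynomial.map_mul,
        Polynomial.map_mul, hob, hocomp, h]
      linear_combination ((X * derivative (Q.map (Int.castRingHom (ZMod 2))))
        * (X * derivative (Q.map (Int.castRingHom (ZMod 2))))) * Ktwo
  · have hterm : (-1:ℤ)^r = -1 := hro.neg_one_pow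
    have hrz : ((r:ℕ) : ZMod 2) = 1 := by
      obtain ⟨k, hk⟩ := hro
      rw [hk]
      push_cast
      linear_combination (k : ZMod 2) * h2z
    have hdiff : ((Q.comp (-X))^2 + Q^2) - (C (2*(-1:ℤ)^r) * ((Q.comp (-X)).comp (X^2)))
        = 4*(Q*Q - Od*Q + Od*Od - dQ - Od.comp (X^2)) := by
      rw [hterm, show (2:ℤ)*(-1) = -2 from by ring, map_neg, C2_eq, hmX2, hOd]
      ring
    rw [map8_zero_iff _ _ _ hdiff, hrz]
    constructor
    · intro h
      rw [Polynomial.map_sub, Polynomial.map_sub, Polynomial.map_add, Polynomial.map_sub,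
        Polynomial.map_mul, Polynomial.map_mul, Polynomial.map_mul, hob, hocomp] at h
      rw [map_one, one_mul]
      linear_combination -h - ((X * derivative (Q.map (Int.castRingHom (ZMod 2))))
        * (Q.map (Int.castRingHom (ZMod 2)))) * Ktwo
    · intro h
      rw [map_one, one_mul] at h
      rw [Polynomial.map_sub, Polynomial.map_sub, Polynomial.map_add, Polynomial.map_sub,
        Polynomial.map_mul, Polynomial.map_mul, Polynomial.map_mul, hob, hocomp, h]
      linear_combination (-((X * derivative (Q.map (Int.castRingHom (ZMod 2))))
        * (Q.map (Int.castRingHom (ZMod 2))))) * Ktwo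



lemma lam_pos (Q : Polynomial ℤ) (hmonic : Q.Monic) (hconst : Odd (Q.coeff 0))
    (lam : ℕ)
    (hlam : lam = orderOf (Ideal.Quotient.mk
      (Ideal.span {Q.map (Int.castRingHom (ZMod 2))}) (X : Polynomial (ZMod 2)))) :
    0 < lam := by
  have hqm : (Q.map (Int.castRingHom (ZMod 2))).Monic := hmonic.map _
  have hfinA : Finite (AdjoinRoot (Q.map (Int.castRingHom (ZMod 2)))) := by
    have hmf : Module.Finite (ZMod 2) (AdjoinRoot (Q.map (Int.castRingHom (ZMod 2)))) :=
      (AdjoinRoot.powerBasis' hqm).finite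
    exact Module.finite_of_finite (ZMod 2)
  have hfin : Finite ((Polynomial (ZMod 2)) ⧸
      (Ideal.span {Q.map (Int.castRingHom (ZMod 2))})) := hfinA
  have hc0 : (Q.map (Int.castRingHom (ZMod 2))).coeff 0 = 1 := by
    rw [coeff_map]
    obtain ⟨k, hk⟩ := hconst
    have h2z : (2:ZMod 2) = 0 := rfl
    rw [hk, show ((Int.castRingHom (ZMod 2)) (2*k+1) = ((2*k+1 : ℤ) : ZMod 2)) from rfl]
    push_cast
    linear_combination (k : ZMod 2) * h2z
  have hdvd : (X : Polynomial (ZMod 2)) ∣ (Q.map (Int.castRingHom (ZMod 2)) - C 1) := by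
    rw [X_dvd_iff, coeff_sub, hc0]
    simp
  obtain ⟨g, hg⟩ := hdvd
  rw [Polynomial.C_1] at hg
  have hq0 : Ideal.Quotient.mk (Ideal.span {Q.map (Int.castRingHom (ZMod 2))})
      (Q.map (Int.castRingHom (ZMod 2))) = 0 :=
    Ideal.Quotient.eq_zero_iff_mem.mpr (Ideal.subset_span rfl)
  have h1 : Q.map (Int.castRingHom (ZMod 2)) = X * g + 1 := by linear_combination hg
  have h2 := congrArg (Ideal.Quotient.mk (Ideal.span {Q.map (Int.castRingHom (ZMod 2))})) h1
  rw [_root_.map_add, _root_.map_mul, _root_.map_one, hq0] at h2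
  have hunit : (Ideal.Quotient.mk (Ideal.span {Q.map (Int.castRingHom (ZMod 2))})
      (X : Polynomial (ZMod 2)))
      * (- Ideal.Quotient.mk (Ideal.span {Q.map (Int.castRingHom (ZMod 2))}) g) = 1 := by
    linear_combination h2
  have hu : IsUnit (Ideal.Quotient.mk (Ideal.span {Q.map (Int.castRingHom (ZMod 2))})
      (X : Polynomial (ZMod 2))) := IsUnit.of_mul_eq_one _ hunit
  rw [hlam, ← hu.unit_spec, orderOf_units]
  exact orderOf_pos _

lemma dQ_coeff_vanish (Q : Polynomial ℤ) (r : ℕ) (hr : Q.natDegree = r)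
    (hmonic : Q.Monic) (dQ : Polynomial ℤ) (hdQ : Q.comp (X^2) = Q^2 - 2*dQ) :
    ∀ m, 2*r ≤ m → (dQ.map (Int.castRingHom (ZMod 2))).coeff m = 0 := by
  intro m hm
  have hcoeff := congrArg (fun p => Polynomial.coeff p m) hdQ
  simp only [coeff_sub] at hcoeff
  rw [show (2:Polynomial ℤ) * dQ = C 2 * dQ from by rw [C2_eq], coeff_C_mul] at hcoeff
  have hexp : Q.comp ((X:Polynomial ℤ)^2) = Polynomial.expand ℤ 2 Q := by
    rw [Polynomial.expand_eq_comp_X_pow]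
  rw [hexp, Polynomial.coeff_expand (by norm_num : 0 < 2)] at hcoeff
  have hQ2deg : (Q^2).natDegree = 2*r := by
    rw [hmonic.natDegree_pow, hr]
  have hzero : dQ.coeff m = 0 := by
    rcases eq_or_lt_of_le hm with heq | hlt
    · subst heq
      have hA : (Q^2).coeff (2*r) = 1 := by
        have := (hmonic.pow 2).coeff_natDegree
        rwa [hQ2deg] at this
      have hdvd2 : (2:ℕ) ∣ 2*r := ⟨r, rfl⟩
      rw [if_pos hdvd2, hA] at hcoeff
      have hhalf : 2*r/2 = r := by omega
      rw [hhalf, show Q.coeff r = 1 from by rw [← hr]; exact hmonic.coeff_natDegree] at hcoeff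
      omega
    · have hA : (Q^2).coeff m = 0 := coeff_eq_zero_of_natDegree_lt (by omega)
      rw [hA] at hcoeff
      by_cases h2m : (2:ℕ) ∣ m
      · rw [if_pos h2m] at hcoeff
        have hB : Q.coeff (m/2) = 0 := coeff_eq_zero_of_natDegree_lt (by omega)
        rw [hB] at hcoeff
        omega
      · rw [if_neg h2m] at hcoeff
        omega
  rw [coeff_map, hzero, map_zero]


end

end Stmt14Aux

theorem stmt14 (Q : Polynomial ℤ) (r : ℕ) (hr : Q.natDegree = r)
    (hmonic : Q.Monic) (hconst : Odd (Q.coeff 0))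
    (hirr : Irreducible (Q.map (Int.castRingHom (ZMod 2))))
    (lam : ℕ)
    (hlam : lam = orderOf (Ideal.Quotient.mk
      (Ideal.span {Q.map (Int.castRingHom (ZMod 2))}) (X : Polynomial (ZMod 2)))) :
    (∀ w : ℕ, 1 ≤ w →
      orderOf (Ideal.Quotient.mk
          (Ideal.span {Q.map (Int.castRingHom (ZMod (2 ^ w)))})
          (X : Polynomial (ZMod (2 ^ w)))) = 2 ^ (w - 1) * lam) ↔
      (¬ conditionS Q ∧ ¬ conditionS (Q.comp (-X))) := by
  classical
  have hr1 : 1 ≤ r := by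
    by_contra h
    have hr0 : Q.natDegree = 0 := by omega
    have hQ1 : Q = 1 := hmonic.natDegree_eq_zero.mp hr0
    rw [hQ1, Polynomial.map_one] at hirr
    exact hirr.not_isUnit isUnit_one
  have lampos := Stmt14Aux.lam_pos Q hmonic hconst lam hlam
  have hord : ∀ w m : ℕ, orderOf (Ideal.Quotient.mk
      (Ideal.span {Q.map (Int.castRingHom (ZMod (2^w)))}) (X : Polynomial (ZMod (2^w)))) ∣ m
      ↔ (X : Polynomial ℤ)^m - 1 ∈ Stmt14Aux.In Q w := by
    intro w m
    rw [Stmt14Aux.order_dvd_iff Q (2^w) m, show Ideal.span {(C (((2^w : ℕ)):ℤ) : Polynomial ℤ), Q}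
      = Stmt14Aux.In Q w from by rw [Stmt14Aux.In, Stmt14Aux.C_nat_two_pow]]
  have hlamd : ∀ m, lam ∣ m ↔ (X : Polynomial ℤ)^m - 1 ∈ Stmt14Aux.In Q 1 := by
    intro m
    rw [hlam, Stmt14Aux.order_dvd_iff Q 2 m, show Ideal.span {(C (((2:ℕ)):ℤ) : Polynomial ℤ), Q}
      = Stmt14Aux.In Q 1 from by rw [Stmt14Aux.In, Stmt14Aux.C2n_eq, pow_one]]
  obtain ⟨u0, v0, huv⟩ := Ideal.mem_span_pair.mp ((hlamd lam).mp dvd_rfl)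
  have h₀ : (X : Polynomial ℤ)^lam - 1 = 2*u0 + Q*v0 := by linear_combination -huv
  have lamodd := Stmt14Aux.lam_odd Q hirr lam lampos hlamd
  obtain ⟨Od, hOd⟩ := Stmt14Aux.exists_Od Q
  obtain ⟨dQ, hdQ⟩ := Stmt14Aux.exists_delta Q
  obtain ⟨dv, hdv⟩ := Stmt14Aux.exists_delta v0
  obtain ⟨du, hdu⟩ := Stmt14Aux.exists_delta u0
  have hqm : (Q.map (Int.castRingHom (ZMod 2))).Monic := hmonic.map _
  have hqdeg : (Q.map (Int.castRingHom (ZMod 2))).natDegree = r := by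
    rw [hmonic.natDegree_map, hr]
  have hqp := Stmt14Aux.qprime Q hirr
  have hF3 := Stmt14Aux.key_bar Q lam u0 v0 dQ dv du h₀ hdQ hdv hdu
  have hOv := Stmt14Aux.od_inverse Q lam lampos lamodd u0 v0 h₀
  have hdDeg := Stmt14Aux.dQ_coeff_vanish Q r hr hmonic dQ hdQ
  have hE1 := Stmt14Aux.equiv_one (Q.map (Int.castRingHom (ZMod 2)))
      (v0.map (Int.castRingHom (ZMod 2))) (u0.map (Int.castRingHom (ZMod 2)))
      (dQ.map (Int.castRingHom (ZMod 2))) (dv.map (Int.castRingHom (ZMod 2))) r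
      hr1 hqm hqdeg hqp hF3 hOv hdDeg
  have hE0 := Stmt14Aux.equiv_zero (Q.map (Int.castRingHom (ZMod 2)))
      (v0.map (Int.castRingHom (ZMod 2))) (u0.map (Int.castRingHom (ZMod 2)))
      (dQ.map (Int.castRingHom (ZMod 2))) (dv.map (Int.castRingHom (ZMod 2))) r
      hr1 hqm hqdeg hqp hF3 hOv hdDeg
  have hB1 := Stmt14Aux.condS_iff Q hmonic Od dQ hOd hdQ
  have hB2 := Stmt14Aux.condSneg_iff Q r hr hr1 hmonic Od dQ hOd hdQ
  have hmu : (u0 ∈ Stmt14Aux.In Q 1) ↔ (Q.map (Int.castRingHom (ZMod 2)))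
      ∣ (u0.map (Int.castRingHom (ZMod 2))) := Stmt14Aux.memIn1_iff Q u0
  have hmu1 : ((u0 + 1) ∈ Stmt14Aux.In Q 1) ↔ (Q.map (Int.castRingHom (ZMod 2)))
      ∣ (u0.map (Int.castRingHom (ZMod 2))) + 1 := by
    rw [Stmt14Aux.memIn1_iff, Polynomial.map_add, Polynomial.map_one]
  have hPA : (∀ w : ℕ, 1 ≤ w → orderOf (Ideal.Quotient.mk
      (Ideal.span {Q.map (Int.castRingHom (ZMod (2^w)))}) (X : Polynomial (ZMod (2^w))))
      = 2^(w-1) * lam) ↔ (u0 ∉ Stmt14Aux.In Q 1 ∧ (u0+1) ∉ Stmt14Aux.In Q 1) :=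
    Stmt14Aux.partA Q hconst hirr lam lampos u0 v0 h₀ _ hord hlamd
  rw [hPA, hB1, hB2, ← hE1, ← hE0, hmu, hmu1]
  exact and_comm
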